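/- Every set S ⊆ ℝⁿ definable by a first-order formula in the theory ⟨ℝ, ℤ, +, ≤⟩ (linear arithmetic over reals and integers) belongs to the Borel class F_σ ∩ G_δ of the natural (Euclidean) topology on ℝⁿ. -/

import Mathlib

/-- Formulas of the first-order theory ⟨ℝ, ℤ, +, ≤⟩: atoms are the ternary
addition predicate `x + y = z`, the order `x ≤ y`, and the integrality
predicate `x ∈ ℤ`; formulas are closed under negation, conjunction and
existential quantification (over the reals; quantification over the
integers is expressed by relativizing to the integrality predicate). -/
inductive LinFml : Type
  | add : ℕ → ℕ → ℕ → LinFml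
  | le : ℕ → ℕ → LinFml
  | int : ℕ → LinFml
  | not : LinFml → LinFml
  | and : LinFml → LinFml → LinFml
  | ex : ℕ → LinFml → LinFml

/-- Satisfaction of a formula under a real valuation of the variables. -/
def LinFml.Sat : LinFml → (ℕ → ℝ) → Prop
  | .add i j k, v => v i + v j = v k
  | .le i j, v => v i ≤ v j
  | .int i, v => ∃ z : ℤ, v i = (z : ℝ)
  | .not φ, v => ¬ φ.Sat v
  | .and φ ψ, v => φ.Sat v ∧ ψ.Sat v
  | .ex i φ, v => ∃ x : ℝ, φ.Sat (Function.update v i x)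

/-- `S ⊆ ℝⁿ` is definable in ⟨ℝ, ℤ, +, ≤⟩ if it is the set of values of the
first `n` variables satisfying some formula (other variables being fixed). -/
def LinDefinable {n : ℕ} (S : Set (Fin n → ℝ)) : Prop :=
  ∃ φ : LinFml,
    S = {x | φ.Sat fun i => if h : i < n then x ⟨i, h⟩ else 0}

/-- A set is `F_σ` if it is a countable union of closed sets. -/
def IsFsigma {α : Type*} [TopologicalSpace α] (s : Set α) : Prop :=
  ∃ C : ℕ → Set α, (∀ i, IsClosed (C i)) ∧ s = ⋃ i, C i



/-! ### Linear forms -/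

abbrev LinForm := List (ℚ × ℕ)

def evalL : LinForm → (ℕ → ℝ) → ℝ
  | [], _ => 0
  | (a, j) :: c, v => (a : ℝ) * v j + evalL c v

lemma evalL_append (c₁ c₂ : LinForm) (v : ℕ → ℝ) :
    evalL (c₁ ++ c₂) v = evalL c₁ v + evalL c₂ v := by
  induction c₁ with
  | nil => simp [evalL]
  | cons p c ih => obtain ⟨a, j⟩ := p; simp [evalL, ih]; ring

def scale (r : ℚ) (c : LinForm) : LinForm := c.map fun p => (r * p.1, p.2)

lemma evalL_scale (r : ℚ) (c : LinForm) (v : ℕ → ℝ) :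
    evalL (scale r c) v = (r : ℝ) * evalL c v := by
  induction c with
  | nil => simp [scale, evalL]
  | cons p c ih => obtain ⟨a, j⟩ := p; simp [scale, evalL] at ih ⊢; rw [ih]; push_cast; ring

def coeffOf (i : ℕ) : LinForm → ℚ
  | [] => 0
  | (a, j) :: c => (if j = i then a else 0) + coeffOf i c

def restOf (i : ℕ) (c : LinForm) : LinForm := c.filter fun p => p.2 ≠ i

lemma evalL_update (i : ℕ) (c : LinForm) (v : ℕ → ℝ) (x : ℝ) :
    evalL c (Function.update v i x) = (coeffOf i c : ℝ) * x + evalL (restOf i c) v := by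
  induction c with
  | nil => simp [evalL, coeffOf, restOf]
  | cons p c ih =>
      obtain ⟨a, j⟩ := p
      by_cases h : j = i
      · subst h
        simp [evalL, coeffOf, restOf, ih, Function.update_self]
        push_cast; ring
      · simp [evalL, coeffOf, restOf, h, Function.update_of_ne h, ih]
        push_cast; ring

lemma evalL_restOf_update (i : ℕ) (c : LinForm) (v : ℕ → ℝ) (x : ℝ) :
    evalL (restOf i c) (Function.update v i x) = evalL (restOf i c) v := by
  induction c with
  | nil => simp [restOf, evalL]
  | cons p c ih =>
      obtain ⟨a, j⟩ := p
      by_cases h : j = i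
      · simpa [restOf, h] using ih
      · simpa [restOf, h, evalL, Function.update_of_ne h] using ih

/-! ### Quantifier-free LRA formulas -/

inductive LFml : Type
  | le : LinForm → ℚ → LFml
  | not : LFml → LFml
  | and : LFml → LFml → LFml

def LFml.Sat : LFml → (ℕ → ℝ) → Prop
  | .le c q, v => evalL c v ≤ (q : ℝ)
  | .not ψ, v => ¬ ψ.Sat v
  | .and ψ₁ ψ₂, v => ψ₁.Sat v ∧ ψ₂.Sat v

abbrev Lit := Bool × LinForm × ℚ
abbrev Clause := List Lit

def satLit (L : Lit) (v : ℕ → ℝ) : Prop :=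
  if L.1 then evalL L.2.1 v ≤ (L.2.2 : ℝ) else (L.2.2 : ℝ) < evalL L.2.1 v

def satClause (cl : Clause) (v : ℕ → ℝ) : Prop := ∀ L ∈ cl, satLit L v

def satDNF (D : List Clause) (v : ℕ → ℝ) : Prop := ∃ cl ∈ D, satClause cl v

def negLit (L : Lit) : Lit := (!L.1, L.2)

lemma satLit_negLit (L : Lit) (v : ℕ → ℝ) : satLit (negLit L) v ↔ ¬ satLit L v := by
  obtain ⟨b, c, q⟩ := L
  cases b <;> simp [satLit, negLit, not_le, not_lt]

def andDNF (D₁ D₂ : List Clause) : List Clause :=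
  D₁.flatMap fun c₁ => D₂.map fun c₂ => c₁ ++ c₂

lemma satDNF_andDNF (D₁ D₂ : List Clause) (v : ℕ → ℝ) :
    satDNF (andDNF D₁ D₂) v ↔ satDNF D₁ v ∧ satDNF D₂ v := by
  simp only [satDNF, andDNF, List.mem_flatMap, List.mem_map]
  constructor
  · rintro ⟨cl, ⟨c₁, h₁, c₂, h₂, rfl⟩, hsat⟩
    rw [satClause, List.forall_mem_append] at hsat
    exact ⟨⟨c₁, h₁, hsat.1⟩, ⟨c₂, h₂, hsat.2⟩⟩
  · rintro ⟨⟨c₁, h₁, hs₁⟩, ⟨c₂, h₂, hs₂⟩⟩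
    refine ⟨c₁ ++ c₂, ⟨c₁, h₁, c₂, h₂, rfl⟩, ?_⟩
    rw [satClause, List.forall_mem_append]; exact ⟨hs₁, hs₂⟩

def negDNF : List Clause → List Clause
  | [] => [[]]
  | cl :: D => andDNF (cl.map fun L => [negLit L]) (negDNF D)

lemma satDNF_negDNF (D : List Clause) (v : ℕ → ℝ) :
    satDNF (negDNF D) v ↔ ¬ satDNF D v := by
  induction D with
  | nil => simp [satDNF, negDNF, satClause]
  | cons cl D ih =>
      rw [negDNF, satDNF_andDNF]
      have h1 : satDNF (cl.map fun L => [negLit L]) v ↔ ¬ satClause cl v := by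
        simp only [satDNF, List.mem_map, satClause]
        constructor
        · rintro ⟨_, ⟨L, hL, rfl⟩, hsat⟩ hall
          exact (satLit_negLit L v).mp (hsat _ (by simp)) (hall L hL)
        · intro h
          have h' : ∃ L ∈ cl, ¬ satLit L v := by
            by_contra hc
            push_neg at hc
            exact h hc
          obtain ⟨L, hmem, hns⟩ := h'
          exact ⟨[negLit L], ⟨L, hmem, rfl⟩, by
            intro L' hL'
            simp at hL'
            subst hL'
            exact (satLit_negLit L v).mpr hns⟩
      rw [h1, ih]
      simp only [satDNF, List.mem_cons]
      constructor
      · rintro ⟨h2, h3⟩ ⟨cl', hcl', hsat⟩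
        rcases hcl' with rfl | h
        · exact h2 hsat
        · exact h3 ⟨cl', h, hsat⟩
      · intro h
        constructor
        · intro hs; exact h ⟨cl, Or.inl rfl, hs⟩
        · rintro ⟨cl', h', hs⟩; exact h ⟨cl', Or.inr h', hs⟩

def toDNF : LFml → List Clause
  | .le c q => [[(true, c, q)]]
  | .not ψ => negDNF (toDNF ψ)
  | .and ψ₁ ψ₂ => andDNF (toDNF ψ₁) (toDNF ψ₂)

lemma satDNF_toDNF (ψ : LFml) (v : ℕ → ℝ) : satDNF (toDNF ψ) v ↔ ψ.Sat v := by
  induction ψ with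
  | le c q => simp [toDNF, satDNF, satClause, satLit, LFml.Sat]
  | not ψ ih => rw [toDNF, satDNF_negDNF, ih]; rfl
  | and ψ₁ ψ₂ ih₁ ih₂ => rw [toDNF, satDNF_andDNF, ih₁, ih₂]; rfl

def litFml (L : Lit) : LFml := if L.1 then .le L.2.1 L.2.2 else .not (.le L.2.1 L.2.2)

lemma litFml_sat (L : Lit) (v : ℕ → ℝ) : (litFml L).Sat v ↔ satLit L v := by
  obtain ⟨b, c, q⟩ := L; cases b <;> simp [litFml, satLit, LFml.Sat, not_le]

def clauseFml (cl : Clause) : LFml := cl.foldr (fun L ψ => (litFml L).and ψ) (.le [] 0)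

lemma clauseFml_sat (cl : Clause) (v : ℕ → ℝ) : (clauseFml cl).Sat v ↔ satClause cl v := by
  induction cl with
  | nil => simp [clauseFml, satClause, LFml.Sat, evalL]
  | cons L cl ih =>
      simp only [clauseFml, List.foldr_cons, LFml.Sat, satClause, List.mem_cons] at ih ⊢
      rw [litFml_sat, ih]
      constructor
      · rintro ⟨h1, h2⟩ L' (rfl | h) ; exact h1; exact h2 _ h
      · intro h; exact ⟨h _ (Or.inl rfl), fun L' h' => h _ (Or.inr h')⟩

def orFml (ψ₁ ψ₂ : LFml) : LFml := .not ((LFml.not ψ₁).and (.not ψ₂))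

def dnfFml (D : List Clause) : LFml := D.foldr (fun cl ψ => orFml (clauseFml cl) ψ) (.not (.le [] 0))

lemma dnfFml_sat (D : List Clause) (v : ℕ → ℝ) : (dnfFml D).Sat v ↔ satDNF D v := by
  induction D with
  | nil => simp [dnfFml, satDNF, LFml.Sat, evalL]
  | cons cl D ih =>
      simp only [dnfFml, List.foldr_cons, orFml, LFml.Sat, satDNF, List.mem_cons] at ih ⊢
      rw [clauseFml_sat]
      constructor
      · intro h
        rcases Classical.em (satClause cl v) with hc | hc
        · exact ⟨cl, Or.inl rfl, hc⟩
        · rcases Classical.em ((dnfFml D).Sat v) with hd | hd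
          · rcases ih.mp hd with ⟨cl', h', hs⟩; exact ⟨cl', Or.inr h', hs⟩
          · exact absurd ⟨hc, hd⟩ h
      · rintro ⟨cl', (rfl | h'), hs⟩ ⟨h1, h2⟩
        · exact h1 hs
        · exact h2 (ih.mpr ⟨cl', h', hs⟩)
/-! ### Bounds and Fourier–Motzkin elimination -/

abbrev Bound := LinForm × ℚ × Bool

def bval (B : Bound) (w : ℕ → ℝ) : ℝ := evalL B.1 w + (B.2.1 : ℝ)

def satLow (B : Bound) (w : ℕ → ℝ) (u : ℝ) : Prop :=
  if B.2.2 then bval B w < u else bval B w ≤ u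

def satUp (B : Bound) (w : ℕ → ℝ) (u : ℝ) : Prop :=
  if B.2.2 then u < bval B w else u ≤ bval B w

def boundOf (i : ℕ) (L : Lit) : Bound :=
  (scale (-(coeffOf i L.2.1)⁻¹) (restOf i L.2.1), L.2.2 * (coeffOf i L.2.1)⁻¹, !L.1)

def tfreeLit (i : ℕ) (L : Lit) : Lit := (L.1, restOf i L.2.1, L.2.2)

def tfree (i : ℕ) (cl : Clause) : Clause :=
  cl.filterMap fun L => if coeffOf i L.2.1 = 0 then some (tfreeLit i L) else none

def lows (i : ℕ) (cl : Clause) : List Bound :=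
  cl.filterMap fun L =>
    if coeffOf i L.2.1 ≠ 0 ∧ L.1 = decide (coeffOf i L.2.1 < 0) then some (boundOf i L) else none

def ups (i : ℕ) (cl : Clause) : List Bound :=
  cl.filterMap fun L =>
    if coeffOf i L.2.1 ≠ 0 ∧ L.1 = decide (0 < coeffOf i L.2.1) then some (boundOf i L) else none

lemma A_bval (i : ℕ) (L : Lit) (w : ℕ → ℝ) (h : coeffOf i L.2.1 ≠ 0) :
    (coeffOf i L.2.1 : ℝ) * bval (boundOf i L) w
      = (L.2.2 : ℝ) - evalL (restOf i L.2.1) w := by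
  have hA : ((coeffOf i L.2.1 : ℚ) : ℝ) ≠ 0 := by exact_mod_cast h
  simp only [bval, boundOf, evalL_scale]
  push_cast
  field_simp
  ring

lemma low_iff_neg {A r q u B : ℝ} (hA : A < 0) (hB : A * B = q - r) :
    A * u + r ≤ q ↔ B ≤ u := by
  constructor <;> intro h <;> nlinarith

lemma low_iff_pos {A r q u B : ℝ} (hA : 0 < A) (hB : A * B = q - r) :
    q < A * u + r ↔ B < u := by
  constructor <;> intro h <;> nlinarith

lemma up_iff_pos {A r q u B : ℝ} (hA : 0 < A) (hB : A * B = q - r) :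
    A * u + r ≤ q ↔ u ≤ B := by
  constructor <;> intro h <;> nlinarith

lemma up_iff_neg {A r q u B : ℝ} (hA : A < 0) (hB : A * B = q - r) :
    q < A * u + r ↔ u < B := by
  constructor <;> intro h <;> nlinarith

lemma satLit_update_zero (i : ℕ) (L : Lit) (w : ℕ → ℝ) (u : ℝ)
    (h : coeffOf i L.2.1 = 0) :
    satLit L (Function.update w i u) ↔ satLit (tfreeLit i L) w := by
  obtain ⟨b, c, q⟩ := L
  simp only [satLit, tfreeLit, evalL_update i c w u]
  simp only at h
  rw [h]
  push_cast
  simp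
  exact Iff.rfl

lemma satLit_update_low (i : ℕ) (L : Lit) (w : ℕ → ℝ) (u : ℝ)
    (h : coeffOf i L.2.1 ≠ 0) (hb : L.1 = decide (coeffOf i L.2.1 < 0)) :
    satLit L (Function.update w i u) ↔ satLow (boundOf i L) w u := by
  obtain ⟨b, c, q⟩ := L
  have hB := A_bval i (b, c, q) w h
  simp only at h hb hB
  simp only [satLit, satLow, boundOf, evalL_update i c w u]
  cases b with
  | true =>
      have hA : (coeffOf i c : ℝ) < 0 := by exact_mod_cast of_decide_eq_true hb.symm
      simpa [boundOf] using low_iff_neg hA hB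
  | false =>
      have hA : (0:ℝ) < (coeffOf i c : ℝ) := by
        have h1 : ¬ coeffOf i c < 0 := of_decide_eq_false hb.symm
        exact_mod_cast lt_of_le_of_ne (not_lt.mp h1) (Ne.symm h)
      simpa [boundOf] using low_iff_pos hA hB

lemma satLit_update_up (i : ℕ) (L : Lit) (w : ℕ → ℝ) (u : ℝ)
    (h : coeffOf i L.2.1 ≠ 0) (hb : L.1 = decide (0 < coeffOf i L.2.1)) :
    satLit L (Function.update w i u) ↔ satUp (boundOf i L) w u := by
  obtain ⟨b, c, q⟩ := L
  have hB := A_bval i (b, c, q) w h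
  simp only at h hb hB
  simp only [satLit, satUp, boundOf, evalL_update i c w u]
  cases b with
  | true =>
      have hA : (0:ℝ) < (coeffOf i c : ℝ) := by exact_mod_cast of_decide_eq_true hb.symm
      simpa [boundOf] using up_iff_pos hA hB
  | false =>
      have hA : (coeffOf i c : ℝ) < 0 := by
        have h1 : ¬ 0 < coeffOf i c := of_decide_eq_false hb.symm
        exact_mod_cast lt_of_le_of_ne (not_lt.mp h1) h
      simpa [boundOf] using up_iff_neg hA hB

lemma clause_update_iff (i : ℕ) (cl : Clause) (w : ℕ → ℝ) (u : ℝ) :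
    satClause cl (Function.update w i u) ↔
      (satClause (tfree i cl) w ∧ (∀ B ∈ lows i cl, satLow B w u)
        ∧ (∀ B ∈ ups i cl, satUp B w u)) := by
  constructor
  · intro h
    refine ⟨?_, ?_, ?_⟩
    · intro L' hL'
      rw [tfree, List.mem_filterMap] at hL'
      obtain ⟨L, hL, hif⟩ := hL'
      by_cases h0 : coeffOf i L.2.1 = 0
      · rw [if_pos h0] at hif
        obtain rfl := Option.some.inj hif
        exact (satLit_update_zero i L w u h0).mp (h L hL)
      · rw [if_neg h0] at hif; exact absurd hif (by simp)
    · intro B hB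
      rw [lows, List.mem_filterMap] at hB
      obtain ⟨L, hL, hif⟩ := hB
      by_cases h0 : coeffOf i L.2.1 ≠ 0 ∧ L.1 = decide (coeffOf i L.2.1 < 0)
      · rw [if_pos h0] at hif
        obtain rfl := Option.some.inj hif
        exact (satLit_update_low i L w u h0.1 h0.2).mp (h L hL)
      · rw [if_neg h0] at hif; exact absurd hif (by simp)
    · intro B hB
      rw [ups, List.mem_filterMap] at hB
      obtain ⟨L, hL, hif⟩ := hB
      by_cases h0 : coeffOf i L.2.1 ≠ 0 ∧ L.1 = decide (0 < coeffOf i L.2.1)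
      · rw [if_pos h0] at hif
        obtain rfl := Option.some.inj hif
        exact (satLit_update_up i L w u h0.1 h0.2).mp (h L hL)
      · rw [if_neg h0] at hif; exact absurd hif (by simp)
  · rintro ⟨h1, h2, h3⟩ L hL
    by_cases h0 : coeffOf i L.2.1 = 0
    · refine (satLit_update_zero i L w u h0).mpr (h1 _ ?_)
      rw [tfree, List.mem_filterMap]
      exact ⟨L, hL, by rw [if_pos h0]⟩
    · rcases Ne.lt_or_gt h0 with hlt | hgt
      · by_cases hb : L.1 = decide (coeffOf i L.2.1 < 0)
        · refine (satLit_update_low i L w u h0 hb).mpr (h2 _ ?_)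
          rw [lows, List.mem_filterMap]
          exact ⟨L, hL, by rw [if_pos ⟨h0, hb⟩]⟩
        · have hb' : L.1 = decide (0 < coeffOf i L.2.1) := by
            rw [decide_eq_false (not_lt.mpr (le_of_lt hlt) : ¬ 0 < coeffOf i L.2.1)]
            rw [decide_eq_true hlt] at hb
            simpa using hb
          refine (satLit_update_up i L w u h0 hb').mpr (h3 _ ?_)
          rw [ups, List.mem_filterMap]
          exact ⟨L, hL, by rw [if_pos ⟨h0, hb'⟩]⟩
      · by_cases hb : L.1 = decide (0 < coeffOf i L.2.1)
        · refine (satLit_update_up i L w u h0 hb).mpr (h3 _ ?_)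
          rw [ups, List.mem_filterMap]
          exact ⟨L, hL, by rw [if_pos ⟨h0, hb⟩]⟩
        · have hb' : L.1 = decide (coeffOf i L.2.1 < 0) := by
            rw [decide_eq_false (not_lt.mpr (le_of_lt hgt) : ¬ coeffOf i L.2.1 < 0)]
            rw [decide_eq_true hgt] at hb
            simpa using hb
          refine (satLit_update_low i L w u h0 hb').mpr (h2 _ ?_)
          rw [lows, List.mem_filterMap]
          exact ⟨L, hL, by rw [if_pos ⟨h0, hb'⟩]⟩
/-! ### Pair literals and the elimination theorem -/

def pairLit (B₁ B₂ : Bound) : Lit :=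
  if B₁.2.2 || B₂.2.2 then (false, B₂.1 ++ scale (-1) B₁.1, B₁.2.1 - B₂.2.1)
  else (true, B₁.1 ++ scale (-1) B₂.1, B₂.2.1 - B₁.2.1)

lemma satLit_pairLit (B₁ B₂ : Bound) (w : ℕ → ℝ) :
    satLit (pairLit B₁ B₂) w ↔
      (if B₁.2.2 || B₂.2.2 then bval B₁ w < bval B₂ w else bval B₁ w ≤ bval B₂ w) := by
  by_cases h : B₁.2.2 || B₂.2.2
  · simp only [pairLit, if_pos h, satLit, bval, evalL_append, evalL_scale]
    push_cast
    constructor <;> intro <;> simp_all <;> linarith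
  · simp only [pairLit, if_neg h, satLit, bval, evalL_append, evalL_scale]
    push_cast
    constructor <;> intro <;> simp_all <;> linarith

lemma low_total (B₁ B₂ : Bound) (w : ℕ → ℝ) :
    (∀ u, satLow B₁ w u → satLow B₂ w u) ∨ (∀ u, satLow B₂ w u → satLow B₁ w u) := by
  rcases lt_trichotomy (bval B₁ w) (bval B₂ w) with h | h | h
  · right; intro u hu
    have : bval B₂ w ≤ u := by unfold satLow at hu; split at hu <;> linarith
    unfold satLow; split <;> linarith
  · cases hs : B₁.2.2 with
    | true =>
        left; intro u hu
        rw [satLow, if_pos hs] at hu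
        unfold satLow; split <;> linarith
    | false =>
        right; intro u hu
        have : bval B₂ w ≤ u := by unfold satLow at hu; split at hu <;> linarith
        rw [satLow, if_neg (by simp [hs])]
        linarith
  · left; intro u hu
    have : bval B₁ w ≤ u := by unfold satLow at hu; split at hu <;> linarith
    unfold satLow; split <;> linarith

lemma up_total (B₁ B₂ : Bound) (w : ℕ → ℝ) :
    (∀ u, satUp B₁ w u → satUp B₂ w u) ∨ (∀ u, satUp B₂ w u → satUp B₁ w u) := by
  rcases lt_trichotomy (bval B₂ w) (bval B₁ w) with h | h | h
  · right; intro u hu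
    have : u ≤ bval B₂ w := by unfold satUp at hu; split at hu <;> linarith
    unfold satUp; split <;> linarith
  · cases hs : B₁.2.2 with
    | true =>
        left; intro u hu
        rw [satUp, if_pos hs] at hu
        unfold satUp; split <;> linarith
    | false =>
        right; intro u hu
        have : u ≤ bval B₂ w := by unfold satUp at hu; split at hu <;> linarith
        rw [satUp, if_neg (by simp [hs])]
        linarith
  · left; intro u hu
    have : u ≤ bval B₁ w := by unfold satUp at hu; split at hu <;> linarith
    unfold satUp; split <;> linarith

lemma exists_strongest_low (w : ℕ → ℝ) :
    ∀ (lo : List Bound), lo ≠ [] →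
      ∃ B₀ ∈ lo, ∀ u, satLow B₀ w u → ∀ B ∈ lo, satLow B w u := by
  intro lo
  induction lo with
  | nil => intro h; exact absurd rfl h
  | cons B lo ih =>
      intro _
      rcases eq_or_ne lo [] with rfl | hne
      · exact ⟨B, by simp, fun u hu B' hB' => by
          simp at hB'; subst hB'; exact hu⟩
      · obtain ⟨B₀, hB₀, hstr⟩ := ih hne
        rcases low_total B B₀ w with hT | hT
        · refine ⟨B, by simp, fun u hu B' hB' => ?_⟩
          rcases List.mem_cons.mp hB' with rfl | h'
          · exact hu
          · exact hstr u (hT u hu) B' h'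
        · refine ⟨B₀, by simp [hB₀], fun u hu B' hB' => ?_⟩
          rcases List.mem_cons.mp hB' with rfl | h'
          · exact hT u hu
          · exact hstr u hu B' h'

lemma exists_strongest_up (w : ℕ → ℝ) :
    ∀ (up : List Bound), up ≠ [] →
      ∃ B₀ ∈ up, ∀ u, satUp B₀ w u → ∀ B ∈ up, satUp B w u := by
  intro up
  induction up with
  | nil => intro h; exact absurd rfl h
  | cons B up ih =>
      intro _
      rcases eq_or_ne up [] with rfl | hne
      · exact ⟨B, by simp, fun u hu B' hB' => by
          simp at hB'; subst hB'; exact hu⟩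
      · obtain ⟨B₀, hB₀, hstr⟩ := ih hne
        rcases up_total B B₀ w with hT | hT
        · refine ⟨B, by simp, fun u hu B' hB' => ?_⟩
          rcases List.mem_cons.mp hB' with rfl | h'
          · exact hu
          · exact hstr u (hT u hu) B' h'
        · refine ⟨B₀, by simp [hB₀], fun u hu B' hB' => ?_⟩
          rcases List.mem_cons.mp hB' with rfl | h'
          · exact hT u hu
          · exact hstr u hu B' h'

lemma fm_exists (lo up : List Bound) (w : ℕ → ℝ)
    (h : ∀ B₁ ∈ lo, ∀ B₂ ∈ up, satLit (pairLit B₁ B₂) w) :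
    ∃ u, (∀ B ∈ lo, satLow B w u) ∧ (∀ B ∈ up, satUp B w u) := by
  rcases eq_or_ne lo [] with rfl | hlo
  · rcases eq_or_ne up [] with rfl | hup
    · exact ⟨0, by simp, by simp⟩
    · obtain ⟨B₀, hB₀, hstr⟩ := exists_strongest_up w up hup
      refine ⟨bval B₀ w - 1, by simp, hstr _ ?_⟩
      unfold satUp; split <;> linarith
  · obtain ⟨B₁, hB₁, hstr₁⟩ := exists_strongest_low w lo hlo
    rcases eq_or_ne up [] with rfl | hup
    · refine ⟨bval B₁ w + 1, hstr₁ _ ?_, by simp⟩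
      unfold satLow; split <;> linarith
    · obtain ⟨B₂, hB₂, hstr₂⟩ := exists_strongest_up w up hup
      have hp := (satLit_pairLit B₁ B₂ w).mp (h B₁ hB₁ B₂ hB₂)
      by_cases hs : B₁.2.2 || B₂.2.2
      · rw [if_pos hs] at hp
        obtain ⟨u, hu₁, hu₂⟩ := exists_between hp
        refine ⟨u, hstr₁ _ ?_, hstr₂ _ ?_⟩
        · unfold satLow; split <;> linarith
        · unfold satUp; split <;> linarith
      · rw [if_neg hs] at hp
        have hs₁ : B₁.2.2 = false := by revert hs; cases B₁.2.2 <;> simp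
        have hs₂ : B₂.2.2 = false := by revert hs; cases B₂.2.2 <;> simp
        refine ⟨bval B₁ w, hstr₁ _ ?_, hstr₂ _ ?_⟩
        · rw [satLow, hs₁]; simp
        · rw [satUp, hs₂]; simpa using hp

lemma fm_forward (lo up : List Bound) (w : ℕ → ℝ) (u : ℝ)
    (h₁ : ∀ B ∈ lo, satLow B w u) (h₂ : ∀ B ∈ up, satUp B w u) :
    ∀ B₁ ∈ lo, ∀ B₂ ∈ up, satLit (pairLit B₁ B₂) w := by
  intro B₁ hB₁ B₂ hB₂
  have l₁ := h₁ B₁ hB₁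
  have l₂ := h₂ B₂ hB₂
  rw [satLit_pairLit]
  unfold satLow at l₁
  unfold satUp at l₂
  cases h1s : B₁.2.2 <;> cases h2s : B₂.2.2 <;>
    rw [h1s] at l₁ <;> rw [h2s] at l₂ <;> simp_all <;> linarith

def elimClause (i : ℕ) (cl : Clause) : Clause :=
  tfree i cl ++ (lows i cl).flatMap fun B₁ => (ups i cl).map fun B₂ => pairLit B₁ B₂

lemma elimClause_correct (i : ℕ) (cl : Clause) (w : ℕ → ℝ) :
    satClause (elimClause i cl) w ↔ ∃ u, satClause cl (Function.update w i u) := by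
  rw [elimClause, satClause, List.forall_mem_append]
  constructor
  · rintro ⟨htf, hpair⟩
    have h : ∀ B₁ ∈ lows i cl, ∀ B₂ ∈ ups i cl, satLit (pairLit B₁ B₂) w := by
      intro B₁ h₁ B₂ h₂
      exact hpair _ (List.mem_flatMap.mpr ⟨B₁, h₁, List.mem_map.mpr ⟨B₂, h₂, rfl⟩⟩)
    obtain ⟨u, hu₁, hu₂⟩ := fm_exists _ _ w h
    exact ⟨u, (clause_update_iff i cl w u).mpr ⟨htf, hu₁, hu₂⟩⟩
  · rintro ⟨u, hu⟩
    obtain ⟨h1, h2, h3⟩ := (clause_update_iff i cl w u).mp hu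
    refine ⟨h1, ?_⟩
    intro L hL
    obtain ⟨B₁, hB₁, hL'⟩ := List.mem_flatMap.mp hL
    obtain ⟨B₂, hB₂, rfl⟩ := List.mem_map.mp hL'
    exact fm_forward _ _ w u h2 h3 B₁ hB₁ B₂ hB₂

theorem LFml.qe (ψ : LFml) (i : ℕ) :
    ∃ ψ' : LFml, ∀ w, ψ'.Sat w ↔ ∃ u, ψ.Sat (Function.update w i u) := by
  refine ⟨dnfFml ((toDNF ψ).map (elimClause i)), fun w => ?_⟩
  rw [dnfFml_sat]
  simp only [satDNF, List.mem_map]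
  constructor
  · rintro ⟨_, ⟨cl, hcl, rfl⟩, hsat⟩
    obtain ⟨u, hu⟩ := (elimClause_correct i cl w).mp hsat
    exact ⟨u, (satDNF_toDNF ψ _).mp ⟨cl, hcl, hu⟩⟩
  · rintro ⟨u, hu⟩
    obtain ⟨cl, hcl, hsat⟩ := (satDNF_toDNF ψ _).mpr hu
    exact ⟨elimClause i cl, ⟨cl, hcl, rfl⟩, (elimClause_correct i cl w).mpr ⟨u, hsat⟩⟩
/-! ### The decomposition class -/

noncomputable def flr (v : ℕ → ℝ) : ℕ → ℤ := fun j => ⌊v j⌋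
noncomputable def frc (v : ℕ → ℝ) : ℕ → ℝ := fun j => Int.fract (v j)

inductive Dec : Set (ℕ → ℝ) → Prop
  | basic (Z : Set (ℕ → ℤ)) (ψ : LFml) : Dec {v | flr v ∈ Z ∧ ψ.Sat (frc v)}
  | union {s t : Set (ℕ → ℝ)} : Dec s → Dec t → Dec (s ∪ t)

lemma Dec.inter {s t : Set (ℕ → ℝ)} (hs : Dec s) (ht : Dec t) : Dec (s ∩ t) := by
  induction hs generalizing t with
  | basic Z ψ =>
      induction ht with
      | basic Z' ψ' =>
          have : {v | flr v ∈ Z ∧ LFml.Sat ψ (frc v)} ∩ {v | flr v ∈ Z' ∧ LFml.Sat ψ' (frc v)}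
              = {v | flr v ∈ Z ∩ Z' ∧ (ψ.and ψ').Sat (frc v)} := by
            ext v; simp [LFml.Sat, Set.mem_inter_iff]; tauto
          rw [this]
          exact Dec.basic _ _
      | union hs' ht' ih₁ ih₂ =>
          rw [Set.inter_union_distrib_left]
          exact Dec.union ih₁ ih₂
  | union hs' ht' ih₁ ih₂ =>
      rw [Set.union_inter_distrib_right]
      exact Dec.union (ih₁ ht) (ih₂ ht)

def truF : LFml := .le [] 0

lemma truF_sat (w : ℕ → ℝ) : truF.Sat w := by simp [truF, LFml.Sat, evalL]

lemma Dec.compl {s : Set (ℕ → ℝ)} (hs : Dec s) : Dec sᶜ := by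
  induction hs with
  | basic Z ψ =>
      have : {v | flr v ∈ Z ∧ LFml.Sat ψ (frc v)}ᶜ
          = {v | flr v ∈ Zᶜ ∧ truF.Sat (frc v)} ∪ {v | flr v ∈ (Set.univ : Set (ℕ → ℤ)) ∧ (LFml.not ψ).Sat (frc v)} := by
        ext v
        simp [LFml.Sat, truF, evalL]
        tauto
      rw [this]
      exact Dec.union (Dec.basic _ _) (Dec.basic _ _)
  | union hs' ht' ih₁ ih₂ =>
      rw [Set.compl_union]
      exact Dec.inter ih₁ ih₂

lemma flr_update (v : ℕ → ℝ) (i : ℕ) (x : ℝ) :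
    flr (Function.update v i x) = Function.update (flr v) i ⌊x⌋ := by
  funext j
  simp only [flr, Function.update_apply]
  split <;> simp

lemma frc_update (v : ℕ → ℝ) (i : ℕ) (x : ℝ) :
    frc (Function.update v i x) = Function.update (frc v) i (Int.fract x) := by
  funext j
  simp only [frc, Function.update_apply]
  split <;> simp

/-- The formula expressing `ψ ∧ 0 ≤ u_i ∧ u_i < 1`. -/
def bndF (ψ : LFml) (i : ℕ) : LFml :=
  (ψ.and (.le [(-1, i)] 0)).and (.not (.le [(-1, i)] (-1)))

lemma bndF_sat (ψ : LFml) (i : ℕ) (w : ℕ → ℝ) :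
    (bndF ψ i).Sat w ↔ ψ.Sat w ∧ 0 ≤ w i ∧ w i < 1 := by
  simp only [bndF, LFml.Sat, evalL]
  push_cast
  constructor
  · rintro ⟨⟨h1, h2⟩, h3⟩
    refine ⟨h1, by linarith, by linarith [not_le.mp h3]⟩
  · rintro ⟨h1, h2, h3⟩
    exact ⟨⟨h1, by linarith⟩, by simp; linarith⟩

lemma Dec.exists {s : Set (ℕ → ℝ)} (hs : Dec s) (i : ℕ) :
    Dec {v | ∃ x : ℝ, Function.update v i x ∈ s} := by
  induction hs with
  | basic Z ψ =>
      obtain ⟨ψ', hψ'⟩ := (bndF ψ i).qe i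
      have : {v | ∃ x : ℝ, Function.update v i x ∈ {v' | flr v' ∈ Z ∧ LFml.Sat ψ (frc v')}}
          = {v | flr v ∈ {w | ∃ z : ℤ, Function.update w i z ∈ Z} ∧ ψ'.Sat (frc v)} := by
        ext v
        simp only [Set.mem_setOf_eq, flr_update, frc_update]
        constructor
        · rintro ⟨x, hZ, hψ⟩
          refine ⟨⟨⌊x⌋, hZ⟩, (hψ' (frc v)).mpr ⟨Int.fract x, ?_⟩⟩
          rw [bndF_sat]
          refine ⟨hψ, ?_, ?_⟩
          · rw [Function.update_self]; exact Int.fract_nonneg x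
          · rw [Function.update_self]; exact Int.fract_lt_one x
        · rintro ⟨⟨z, hZ⟩, hψ⟩
          obtain ⟨u, hu⟩ := (hψ' (frc v)).mp hψ
          rw [bndF_sat, Function.update_self] at hu
          obtain ⟨hu₁, hu₂, hu₃⟩ := hu
          refine ⟨(z : ℝ) + u, ?_, ?_⟩
          · have hfl : ⌊(z : ℝ) + u⌋ = z := by
              rw [add_comm, Int.floor_add_intCast, Int.floor_eq_zero_iff.mpr ⟨hu₂, hu₃⟩]
              simp
            rwa [hfl]
          · have hfr : Int.fract ((z : ℝ) + u) = u := by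
              rw [Int.fract_intCast_add]
              exact Int.fract_eq_self.mpr ⟨hu₂, hu₃⟩
            rwa [hfr]
      rw [this]
      exact Dec.basic _ _
  | union hs' ht' ih₁ ih₂ =>
      have : ∀ (a b : Set (ℕ → ℝ)), {v | ∃ x : ℝ, Function.update v i x ∈ a ∪ b}
          = {v | ∃ x : ℝ, Function.update v i x ∈ a} ∪ {v | ∃ x : ℝ, Function.update v i x ∈ b} := by
        intro a b; ext v
        simp only [Set.mem_union, Set.mem_setOf_eq]
        exact exists_or
      rw [this]
      exact Dec.union ih₁ ih₂
/-! ### Atoms are decomposable -/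

def eqF (c : LinForm) (q : ℚ) : LFml := (LFml.le c q).and (.le (scale (-1) c) (-q))

lemma eqF_sat (c : LinForm) (q : ℚ) (w : ℕ → ℝ) : (eqF c q).Sat w ↔ evalL c w = q := by
  simp only [eqF, LFml.Sat, evalL_scale]
  push_cast
  constructor
  · rintro ⟨h1, h2⟩; linarith
  · intro h; constructor <;> linarith

lemma evalL_three (i j k : ℕ) (w : ℕ → ℝ) :
    evalL [(1, i), (1, j), (-1, k)] w = w i + w j - w k := by
  simp [evalL]; ring

lemma evalL_two (i j : ℕ) (w : ℕ → ℝ) :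
    evalL [(1, i), (-1, j)] w = w i - w j := by
  simp [evalL]; ring

lemma dec_add (i j k : ℕ) : Dec {v : ℕ → ℝ | v i + v j = v k} := by
  have : {v : ℕ → ℝ | v i + v j = v k}
      = {v | flr v ∈ {z : ℕ → ℤ | z i + z j = z k} ∧ (eqF [(1,i),(1,j),(-1,k)] 0).Sat (frc v)}
      ∪ {v | flr v ∈ {z : ℕ → ℤ | z i + z j = z k - 1} ∧ (eqF [(1,i),(1,j),(-1,k)] 1).Sat (frc v)} := by
    ext v
    simp only [Set.mem_union, Set.mem_setOf_eq, eqF_sat, evalL_three]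
    have fi := Int.floor_add_fract (v i)
    have fj := Int.floor_add_fract (v j)
    have fk := Int.floor_add_fract (v k)
    have hi0 := Int.fract_nonneg (v i)
    have hj0 := Int.fract_nonneg (v j)
    have hk0 := Int.fract_nonneg (v k)
    have hi1 := Int.fract_lt_one (v i)
    have hj1 := Int.fract_lt_one (v j)
    have hk1 := Int.fract_lt_one (v k)
    simp only [flr, frc]
    constructor
    · intro h
      have hIF : ((⌊v i⌋ + ⌊v j⌋ - ⌊v k⌋ : ℤ) : ℝ)
          = -(Int.fract (v i) + Int.fract (v j) - Int.fract (v k)) := by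
        push_cast; linarith
      have hlow : (-2 : ℝ) < ((⌊v i⌋ + ⌊v j⌋ - ⌊v k⌋ : ℤ) : ℝ) := by rw [hIF]; linarith
      have hhigh : ((⌊v i⌋ + ⌊v j⌋ - ⌊v k⌋ : ℤ) : ℝ) < 1 := by rw [hIF]; linarith
      have hlow' : (-2 : ℤ) < ⌊v i⌋ + ⌊v j⌋ - ⌊v k⌋ := by exact_mod_cast hlow
      have hhigh' : ⌊v i⌋ + ⌊v j⌋ - ⌊v k⌋ < 1 := by exact_mod_cast hhigh
      rcases (by omega : ⌊v i⌋ + ⌊v j⌋ - ⌊v k⌋ = 0 ∨ ⌊v i⌋ + ⌊v j⌋ - ⌊v k⌋ = -1) with h0 | h1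
      · left
        have h0' : ((⌊v i⌋ : ℝ) + ⌊v j⌋ - ⌊v k⌋) = 0 := by exact_mod_cast h0
        exact ⟨by omega, by push_cast; linarith⟩
      · right
        have h1' : ((⌊v i⌋ : ℝ) + ⌊v j⌋ - ⌊v k⌋) = -1 := by exact_mod_cast h1
        exact ⟨by omega, by push_cast; linarith⟩
    · rintro (⟨hz, hf⟩ | ⟨hz, hf⟩)
      · have hz' : ((⌊v i⌋ : ℝ) + ⌊v j⌋) = ⌊v k⌋ := by exact_mod_cast hz
        push_cast at hf
        linarith
      · have hz' : ((⌊v i⌋ : ℝ) + ⌊v j⌋) = (⌊v k⌋ : ℝ) - 1 := by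
          have : ((⌊v i⌋ + ⌊v j⌋ : ℤ) : ℝ) = ((⌊v k⌋ - 1 : ℤ) : ℝ) := by exact_mod_cast hz
          push_cast at this
          linarith
        push_cast at hf
        linarith
  rw [this]
  exact Dec.union (Dec.basic _ _) (Dec.basic _ _)

lemma dec_le (i j : ℕ) : Dec {v : ℕ → ℝ | v i ≤ v j} := by
  have : {v : ℕ → ℝ | v i ≤ v j}
      = {v | flr v ∈ {z : ℕ → ℤ | z i < z j} ∧ truF.Sat (frc v)}
      ∪ {v | flr v ∈ {z : ℕ → ℤ | z i = z j} ∧ (LFml.le [(1,i),(-1,j)] 0).Sat (frc v)} := by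
    ext v
    simp [Set.mem_union, Set.mem_setOf_eq, truF, LFml.Sat, evalL_two, evalL]
    have fi := Int.floor_add_fract (v i)
    have fj := Int.floor_add_fract (v j)
    have hi0 := Int.fract_nonneg (v i)
    have hj0 := Int.fract_nonneg (v j)
    have hi1 := Int.fract_lt_one (v i)
    have hj1 := Int.fract_lt_one (v j)
    simp only [flr, frc]
    constructor
    · intro h
      rcases lt_or_eq_of_le (Int.floor_le_floor h) with hlt | heq
      · exact Or.inl hlt
      · refine Or.inr ⟨heq, ?_⟩
        have heq' : ((⌊v i⌋ : ℝ)) = ⌊v j⌋ := by exact_mod_cast heq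
        push_cast
        linarith
    · rintro (hlt | ⟨heq, hf⟩)
      · have hlt' : ((⌊v i⌋ : ℝ)) + 1 ≤ ⌊v j⌋ := by exact_mod_cast Int.add_one_le_iff.mpr hlt
        linarith
      · have heq' : ((⌊v i⌋ : ℝ)) = ⌊v j⌋ := by exact_mod_cast heq
        push_cast at hf
        linarith
  rw [this]
  exact Dec.union (Dec.basic _ _) (Dec.basic _ _)

lemma dec_int (i : ℕ) : Dec {v : ℕ → ℝ | ∃ z : ℤ, v i = (z : ℝ)} := by
  have : {v : ℕ → ℝ | ∃ z : ℤ, v i = (z : ℝ)}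
      = {v | flr v ∈ (Set.univ : Set (ℕ → ℤ)) ∧ (eqF [(1, i)] 0).Sat (frc v)} := by
    ext v
    simp only [Set.mem_setOf_eq, Set.mem_univ, true_and, eqF_sat]
    have : evalL [(1, i)] (frc v) = Int.fract (v i) := by simp [evalL, frc]
    rw [this]
    constructor
    · rintro ⟨z, hz⟩
      rw [hz]
      push_cast
      simp [Int.fract_intCast]
    · intro h
      refine ⟨⌊v i⌋, ?_⟩
      have := Int.floor_add_fract (v i)
      push_cast at h
      linarith
  rw [this]
  exact Dec.basic _ _

theorem dec_sat (φ : LinFml) : Dec {v | φ.Sat v} := by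
  induction φ with
  | add i j k => exact dec_add i j k
  | le i j => exact dec_le i j
  | int i => exact dec_int i
  | not φ ih => exact ih.compl
  | and φ₁ φ₂ ih₁ ih₂ => exact ih₁.inter ih₂
  | ex i φ ih => exact ih.exists i
/-! ### Topology: decomposable sets are F_σ and G_δ -/

section Topology

variable {α : Type*} [TopologicalSpace α]

lemma isFsigma_iUnion_closed {ι : Type*} [Countable ι] {C : ι → Set α}
    (h : ∀ i, IsClosed (C i)) : IsFsigma (⋃ i, C i) := by
  cases isEmpty_or_nonempty ι with
  | inl hempty =>
      refine ⟨fun _ => ∅, fun _ => isClosed_empty, ?_⟩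
      simp
  | inr hne =>
      obtain ⟨f, hf⟩ := exists_surjective_nat ι
      exact ⟨fun n => C (f n), fun n => h _, (hf.iUnion_comp C).symm⟩

lemma isFsigma_iUnion {ι : Type*} [Countable ι] {C : ι → Set α}
    (h : ∀ i, IsFsigma (C i)) : IsFsigma (⋃ i, C i) := by
  choose D hD hDeq using h
  have : (⋃ i, C i) = ⋃ p : ι × ℕ, D p.1 p.2 := by
    ext x
    simp only [Set.mem_iUnion, Prod.exists]
    constructor
    · rintro ⟨i, hx⟩
      rw [hDeq i] at hx
      obtain ⟨m, hm⟩ := Set.mem_iUnion.mp hx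
      exact ⟨i, m, hm⟩
    · rintro ⟨i, m, hm⟩
      exact ⟨i, by rw [hDeq i]; exact Set.mem_iUnion.mpr ⟨m, hm⟩⟩
  rw [this]
  exact isFsigma_iUnion_closed fun p => hD p.1 p.2

lemma isFsigma_union {s t : Set α} (hs : IsFsigma s) (ht : IsFsigma t) :
    IsFsigma (s ∪ t) := by
  rw [Set.union_eq_iUnion]
  exact isFsigma_iUnion fun b => by cases b <;> simpa

end Topology

section UTopology

variable {α : Type*} [UniformSpace α] [(uniformity α).IsCountablyGenerated]

lemma IsOpen.isFsigma' {o : Set α} (ho : IsOpen o) :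
    IsFsigma (o : Set α) := by
  have hgd : IsGδ oᶜ := ho.isClosed_compl.isGδ
  obtain ⟨T, hTopen, hTcount, hTeq⟩ := hgd
  have hcc : Countable T := hTcount.to_subtype
  have : o = ⋃ t : T, (↑t : Set α)ᶜ := by
    have h1 : o = (⋂₀ T)ᶜ := by rw [← hTeq, compl_compl]
    rw [h1]
    ext x
    simp only [Set.mem_compl_iff, Set.mem_sInter, Set.mem_iUnion]
    push_neg
    constructor
    · rintro ⟨t, ht, hx⟩; exact ⟨⟨t, ht⟩, hx⟩
    · rintro ⟨⟨t, ht⟩, hx⟩; exact ⟨t, ht, hx⟩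
  rw [this]
  exact isFsigma_iUnion_closed fun t => (hTopen _ t.2).isClosed_compl

end UTopology

section Topology

variable {α : Type*} [TopologicalSpace α]

inductive Cons : Set α → Prop
  | lc {c o : Set α} : IsClosed c → IsOpen o → Cons (c ∩ o)
  | union {s t : Set α} : Cons s → Cons t → Cons (s ∪ t)

lemma Cons.inter {s t : Set α} (hs : Cons s) (ht : Cons t) : Cons (s ∩ t) := by
  induction hs generalizing t with
  | lc hc ho =>
      induction ht with
      | lc hc' ho' =>
          rename_i c o c' o'
          have : c ∩ o ∩ (c' ∩ o') = (c ∩ c') ∩ (o ∩ o') := by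
            ext x; simp; tauto
          rw [this]
          exact Cons.lc (hc.inter hc') (ho.inter ho')
      | union h₁ h₂ ih₁ ih₂ =>
          rw [Set.inter_union_distrib_left]
          exact Cons.union ih₁ ih₂
  | union h₁ h₂ ih₁ ih₂ =>
      rw [Set.union_inter_distrib_right]
      exact Cons.union (ih₁ ht) (ih₂ ht)

lemma Cons.compl {s : Set α} (hs : Cons s) : Cons sᶜ := by
  induction hs with
  | lc hc ho =>
      rename_i c o
      have : (c ∩ o)ᶜ = ((Set.univ : Set α) ∩ cᶜ) ∪ (oᶜ ∩ Set.univ) := by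
        ext x; simp [Set.mem_compl_iff]; tauto
      rw [this]
      exact Cons.union (Cons.lc isClosed_univ hc.isOpen_compl) (Cons.lc ho.isClosed_compl isOpen_univ)
  | union h₁ h₂ ih₁ ih₂ =>
      rw [Set.compl_union]
      exact Cons.inter ih₁ ih₂

lemma Cons.isClosed' {c : Set α} (hc : IsClosed c) : Cons c := by
  have : c = c ∩ Set.univ := by simp
  rw [this]
  exact Cons.lc hc isOpen_univ

end Topology

section UTopology

variable {α : Type*} [UniformSpace α] [(uniformity α).IsCountablyGenerated]

lemma Cons.isFsigma {s : Set α} (hs : Cons s) : IsFsigma s := by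
  induction hs with
  | lc hc ho =>
      rename_i c o
      obtain ⟨D, hD, hDeq⟩ := ho.isFsigma'
      have : c ∩ o = ⋃ n, c ∩ D n := by rw [hDeq, Set.inter_iUnion]
      rw [this]
      exact isFsigma_iUnion_closed fun n => hc.inter (hD n)
  | union h₁ h₂ ih₁ ih₂ => exact isFsigma_union ih₁ ih₂

end UTopology

section Topology

variable {α : Type*} [TopologicalSpace α]

lemma cons_sat {g : α → ℕ → ℝ} (hg : ∀ j, Continuous fun x => g x j) (ψ : LFml) :
    Cons {x | ψ.Sat (g x)} := by
  induction ψ with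
  | le c q =>
      have hcont : Continuous fun x => evalL c (g x) := by
        induction c with
        | nil => simpa [evalL] using continuous_const
        | cons p c ih => exact (continuous_const.mul (hg p.2)).add ih
      exact Cons.isClosed' (isClosed_le hcont continuous_const)
  | not ψ ih =>
      have : {x | (LFml.not ψ).Sat (g x)} = {x | ψ.Sat (g x)}ᶜ := rfl
      rw [this]
      exact ih.compl
  | and ψ₁ ψ₂ ih₁ ih₂ =>
      have : {x | (ψ₁.and ψ₂).Sat (g x)} = {x | ψ₁.Sat (g x)} ∩ {x | ψ₂.Sat (g x)} := rfl
      rw [this]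
      exact ih₁.inter ih₂

end Topology
/-! ### Assembly -/

noncomputable section Assembly

variable {n : ℕ}

/-- Extension of a point of `ℝⁿ` to a valuation. -/
def extR (x : Fin n → ℝ) : ℕ → ℝ := fun i => if h : i < n then x ⟨i, h⟩ else 0

def extZ (z : Fin n → ℤ) : ℕ → ℤ := fun i => if h : i < n then z ⟨i, h⟩ else 0

lemma dec_fsigma {A : Set (ℕ → ℝ)} (h : Dec A) :
    IsFsigma {x : Fin n → ℝ | extR x ∈ A} := by
  induction h with
  | union hs ht ihs iht =>
      rename_i s t
      have : {x : Fin n → ℝ | extR x ∈ s ∪ t}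
          = {x : Fin n → ℝ | extR x ∈ s} ∪ {x : Fin n → ℝ | extR x ∈ t} := by
        ext x; simp [Set.mem_union]
      rw [this]
      exact isFsigma_union ihs iht
  | basic Z ψ =>
      have key : {x : Fin n → ℝ | extR x ∈ {v | flr v ∈ Z ∧ ψ.Sat (frc v)}}
          = ⋃ z : {z : Fin n → ℤ // extZ z ∈ Z},
              ({x : Fin n → ℝ | ∀ i, (z.1 i : ℝ) ≤ x i ∧ x i < z.1 i + 1}
                ∩ {x : Fin n → ℝ | ψ.Sat fun j => if h : j < n then x ⟨j, h⟩ - z.1 ⟨j, h⟩ else 0}) := by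
        ext x
        simp only [Set.mem_setOf_eq, Set.mem_iUnion, Set.mem_inter_iff]
        constructor
        · rintro ⟨hZ, hψ⟩
          refine ⟨⟨fun i => ⌊x i⌋, ?_⟩, fun i => ⟨Int.floor_le _, Int.lt_floor_add_one _⟩, ?_⟩
          · have : extZ (fun i : Fin n => ⌊x i⌋) = flr (extR x) := by
              funext j
              by_cases hj : j < n
              · simp [extZ, flr, extR, hj]
              · simp [extZ, flr, extR, hj]
            rwa [this]
          · have : (fun j => if h : j < n then x ⟨j, h⟩ - ((⌊x ⟨j, h⟩⌋ : ℤ) : ℝ) else 0)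
                = frc (extR x) := by
              funext j
              simp only [frc, extR]
              by_cases hj : j < n
              · rw [dif_pos hj, dif_pos hj, Int.fract]
              · rw [dif_neg hj, dif_neg hj]; simp
            rwa [this]
        · rintro ⟨⟨z, hz⟩, hbox, hψ⟩
          have hfl : ∀ i : Fin n, ⌊x i⌋ = z i := fun i =>
            Int.floor_eq_iff.mpr ⟨(hbox i).1, (hbox i).2⟩
          constructor
          · have : flr (extR x) = extZ z := by
              funext j
              by_cases hj : j < n
              · simp [flr, extR, extZ, hj, hfl]
              · simp [flr, extR, extZ, hj]
            rwa [this]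
          · have : frc (extR x) = fun j => if h : j < n then x ⟨j, h⟩ - (z ⟨j, h⟩ : ℝ) else 0 := by
              funext j
              simp only [frc, extR]
              by_cases hj : j < n
              · rw [dif_pos hj, dif_pos hj, Int.fract, hfl]
              · rw [dif_neg hj, dif_neg hj]; simp
            rwa [this]
      rw [key]
      refine isFsigma_iUnion fun z => ?_
      refine Cons.isFsigma (Cons.inter ?_ ?_)
      · have : {x : Fin n → ℝ | ∀ i, (z.1 i : ℝ) ≤ x i ∧ x i < z.1 i + 1}
            = {x : Fin n → ℝ | ∀ i, (z.1 i : ℝ) ≤ x i} ∩ {x : Fin n → ℝ | ∀ i, x i < z.1 i + 1} := by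
          ext x; simp [forall_and]
        rw [this]
        refine Cons.lc ?_ ?_
        · rw [Set.setOf_forall]
          exact isClosed_iInter fun i => isClosed_le continuous_const (continuous_apply i)
        · rw [Set.setOf_forall]
          exact isOpen_iInter_of_finite fun i => isOpen_lt (continuous_apply i) continuous_const
      · refine cons_sat (g := fun (x : Fin n → ℝ) j => if h : j < n then x ⟨j, h⟩ - (z.1 ⟨j, h⟩ : ℝ) else 0) ?_ ψ
        intro j
        by_cases hj : j < n
        · simp only [dif_pos hj]
          exact (continuous_apply _).sub continuous_const
        · simp only [dif_neg hj]
          exact continuous_const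

end Assembly
/-- Every set `S ⊆ ℝⁿ` definable in the first-order theory ⟨ℝ, ℤ, +, ≤⟩
belongs to the class `F_σ ∩ G_δ` of the natural (Euclidean) topology on ℝⁿ. -/
theorem definable_isFsigma_and_isGdelta {n : ℕ} (hn : 0 < n)
    (S : Set (Fin n → ℝ)) (hS : LinDefinable S) :
    IsFsigma S ∧ IsGδ S := by
  obtain ⟨φ, hφ⟩ := hS
  have hd : Dec {v | φ.Sat v} := dec_sat φ
  constructor
  · rw [hφ]
    exact dec_fsigma (n := n) hd
  · have hc : IsFsigma {x : Fin n → ℝ | extR x ∈ {v | φ.Sat v}ᶜ} := dec_fsigma (n := n) hd.compl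
    obtain ⟨C, hCcl, hCeq⟩ := hc
    have hSc : S = ⋂ i, (C i)ᶜ := by
      have h1 : Sᶜ = ⋃ i, C i := by
        rw [hφ, ← hCeq]
        rfl
      rw [← compl_compl S, h1]
      simp [Set.compl_iUnion]
    rw [hSc]
    exact IsGδ.iInter fun i => (hCcl i).isOpen_compl.isGδ
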